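/- For every r ≥ 1 and all real numbers a, b one has |(a+b)^r − a^r| ≤ 2^{r−1}·r·(|a|^{r−1} + |b|^{r−1})·|b|. -/

import Mathlib

/-- Signed power: `spow t r = sign(t) * |t|^r`. For `t ≥ 0` this is the usual real power. -/
noncomputable def spow (t r : ℝ) : ℝ := Real.sign t * |t| ^ r

lemma spow_of_pos {t : ℝ} (ht : 0 < t) (r : ℝ) : spow t r = t ^ r := by
  simp [spow, Real.sign_of_pos ht, abs_of_pos ht]

lemma spow_of_neg {t : ℝ} (ht : t < 0) (r : ℝ) : spow t r = -(-t) ^ r := by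
  simp [spow, Real.sign_of_neg ht, abs_of_neg ht]

lemma spow_zero' (r : ℝ) : spow 0 r = 0 := by simp [spow]

lemma hasDerivAt_spow {r : ℝ} (hr : 1 ≤ r) (t : ℝ) :
    HasDerivAt (fun x => spow x r) (r * |t| ^ (r - 1)) t := by
  rcases lt_trichotomy t 0 with ht | rfl | ht
  · have h1 : HasDerivAt (fun x : ℝ => (-x) ^ r) (r * (-t) ^ (r - 1) * (-1)) t :=
      (Real.hasDerivAt_rpow_const (p := r) (Or.inl (by linarith))).comp t (hasDerivAt_neg t)
    have h2 : HasDerivAt (fun x : ℝ => -((-x) ^ r)) (r * (-t) ^ (r - 1)) t := by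
      have h3 := h1.neg
      simp only [mul_neg, mul_one, neg_neg] at h3
      exact h3
    have heq : (fun x : ℝ => spow x r) =ᶠ[nhds t] fun x : ℝ => -((-x) ^ r) := by
      filter_upwards [eventually_lt_nhds ht] with x hx
      exact spow_of_neg hx r
    have := h2.congr_of_eventuallyEq heq
    simpa [abs_of_neg ht] using this
  · rw [hasDerivAt_iff_tendsto_slope]
    have heq : slope (fun x => spow x r) 0 =ᶠ[nhdsWithin 0 {(0:ℝ)}ᶜ] fun x => |x| ^ (r - 1) := by
      filter_upwards [self_mem_nhdsWithin] with x hx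
      have hx0 : x ≠ 0 := hx
      have habs : |x| ≠ 0 := abs_ne_zero.mpr hx0
      have h1 : |x| ^ r = |x| ^ (r - 1) * |x| := by
        have := Real.rpow_add_one habs (r - 1)
        rwa [sub_add_cancel] at this
      have key : spow x r = |x| ^ (r - 1) * x := by
        rcases lt_or_gt_of_ne hx0 with h | h
        · rw [spow, Real.sign_of_neg h, h1, abs_of_neg h]; ring
        · rw [spow, Real.sign_of_pos h, h1, abs_of_pos h]; ring
      rw [slope_def_field, spow_zero', key, sub_zero, sub_zero, mul_div_assoc,
        div_self hx0, mul_one]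
    rw [Filter.tendsto_congr' heq]
    have hc : ContinuousAt (fun x : ℝ => |x| ^ (r - 1)) 0 :=
      ContinuousAt.rpow_const continuous_abs.continuousAt (Or.inr (by linarith))
    have := hc.tendsto
    simp only [abs_zero] at this
    rcases hr.eq_or_lt with h1 | h1
    · have : (fun x : ℝ => |x| ^ (r - 1)) = fun _ => (1 : ℝ) := by
        funext x; rw [← h1]; simp
      rw [this, ← h1]
      simp only [sub_self, abs_zero, Real.rpow_zero, mul_one, one_mul]
      exact tendsto_const_nhds
    · have hne : r - 1 ≠ 0 := ne_of_gt (by linarith)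
      have hz : (0:ℝ) ^ (r - 1) = 0 := Real.zero_rpow hne
      rw [hz] at this
      simpa [Real.zero_rpow hne, abs_zero] using this.mono_left nhdsWithin_le_nhds
  · have heq : (fun x : ℝ => spow x r) =ᶠ[nhds t] fun x : ℝ => x ^ r := by
      filter_upwards [eventually_gt_nhds ht] with x hx
      exact spow_of_pos hx r
    have := (Real.hasDerivAt_rpow_const (p := r) (Or.inl (ne_of_gt ht))).congr_of_eventuallyEq heq
    simpa [abs_of_pos ht] using this

/-- For every `r ≥ 1` and all real `a, b` one has
`|(a+b)^r − a^r| ≤ 2^(r−1) · r · (|a|^(r−1) + |b|^(r−1)) · |b|`. -/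
theorem stmt4 (r : ℝ) (hr : 1 ≤ r) (a b : ℝ) :
    |spow (a + b) r - spow a r| ≤
      (2 : ℝ) ^ (r - 1) * r * (|a| ^ (r - 1) + |b| ^ (r - 1)) * |b| := by
  set C : ℝ := 2 ^ (r - 1) * r * (|a| ^ (r - 1) + |b| ^ (r - 1)) with hC
  have hs : Convex ℝ (Set.uIcc a (a + b)) := convex_uIcc _ _
  have hder : ∀ x ∈ Set.uIcc a (a + b),
      HasDerivWithinAt (fun x => spow x r) (r * |x| ^ (r - 1)) (Set.uIcc a (a + b)) x :=
    fun x _ => (hasDerivAt_spow hr x).hasDerivWithinAt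
  have hbound : ∀ x ∈ Set.uIcc a (a + b), ‖r * |x| ^ (r - 1)‖ ≤ C := by
    intro x hx
    have hxle : |x| ≤ |a| + |b| := by
      rcases le_total a (a + b) with h | h
      · rw [Set.uIcc_of_le h] at hx
        rcases abs_cases a with ⟨h1, h2⟩ | ⟨h1, h2⟩ <;> rcases abs_cases b with ⟨h3, h4⟩ | ⟨h3, h4⟩ <;>
          exact abs_le.mpr ⟨by linarith [hx.1, hx.2], by linarith [hx.1, hx.2]⟩
      · rw [Set.uIcc_of_ge h] at hx
        rcases abs_cases a with ⟨h1, h2⟩ | ⟨h1, h2⟩ <;> rcases abs_cases b with ⟨h3, h4⟩ | ⟨h3, h4⟩ <;>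
          exact abs_le.mpr ⟨by linarith [hx.1, hx.2], by linarith [hx.1, hx.2]⟩
    have h1 : |x| ^ (r - 1) ≤ (|a| + |b|) ^ (r - 1) :=
      Real.rpow_le_rpow (abs_nonneg x) hxle (by linarith)
    have h2 : |a| + |b| ≤ 2 * max |a| |b| := by
      rcases max_cases |a| |b| with ⟨hm, hm'⟩ | ⟨hm, hm'⟩ <;> rw [hm] <;> linarith
    have h3 : (|a| + |b|) ^ (r - 1) ≤ (2 * max |a| |b|) ^ (r - 1) :=
      Real.rpow_le_rpow (by positivity) h2 (by linarith)
    have h4 : (2 * max |a| |b|) ^ (r - 1) = 2 ^ (r - 1) * (max |a| |b|) ^ (r - 1) :=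
      Real.mul_rpow (by norm_num) (le_max_of_le_left (abs_nonneg a))
    have h5 : (max |a| |b|) ^ (r - 1) ≤ |a| ^ (r - 1) + |b| ^ (r - 1) := by
      rcases max_cases |a| |b| with ⟨hm, _⟩ | ⟨hm, _⟩ <;> rw [hm] <;>
        [linarith [Real.rpow_nonneg (abs_nonneg b) (r - 1)];
         linarith [Real.rpow_nonneg (abs_nonneg a) (r - 1)]]
    have h6 : |x| ^ (r - 1) ≤ 2 ^ (r - 1) * (|a| ^ (r - 1) + |b| ^ (r - 1)) := by
      calc |x| ^ (r - 1) ≤ (2 * max |a| |b|) ^ (r - 1) := le_trans h1 h3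
        _ = 2 ^ (r - 1) * (max |a| |b|) ^ (r - 1) := h4
        _ ≤ 2 ^ (r - 1) * (|a| ^ (r - 1) + |b| ^ (r - 1)) := by
            apply mul_le_mul_of_nonneg_left h5 (by positivity)
    have hrpos : (0:ℝ) < r := by linarith
    rw [Real.norm_eq_abs, abs_of_nonneg (by positivity), hC]
    calc r * |x| ^ (r - 1) ≤ r * (2 ^ (r - 1) * (|a| ^ (r - 1) + |b| ^ (r - 1))) :=
          mul_le_mul_of_nonneg_left h6 hrpos.le
      _ = 2 ^ (r - 1) * r * (|a| ^ (r - 1) + |b| ^ (r - 1)) := by ring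
  have := hs.norm_image_sub_le_of_norm_hasDerivWithin_le hder hbound
    (Set.left_mem_uIcc) (Set.right_mem_uIcc)
  simpa [Real.norm_eq_abs, add_sub_cancel_left] using this
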